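/- Conjugate of the χ²-distance generator (claim in the proof of Theorem 3). For φ(t) = (t - 1)² / t and every s : ℝ, the extended-real supremum φ*(s) := ⨆ (t : ℝ) (_ : 0 < t), (((s * t - (t - 1)^2 / t) : ℝ) : EReal) satisfies: if s ≤ 1 then φ*(s) = ((2 - 2 * Real.sqrt (1 - s) : ℝ) : EReal), and if 1 < s then φ*(s) = ⊤. -/
import Mathlib


/-- Conjugate of the χ²-distance generator φ(t) = (t - 1)²/t
(claim in the proof of Theorem 3). -/
theorem chi_square_conjugate (s : ℝ) :
    (s ≤ 1 →
      (⨆ (t : ℝ) (_ : 0 < t), (((s * t - (t - 1) ^ 2 / t) : ℝ) : EReal))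
        = ((2 - 2 * Real.sqrt (1 - s) : ℝ) : EReal)) ∧
    (1 < s →
      (⨆ (t : ℝ) (_ : 0 < t), (((s * t - (t - 1) ^ 2 / t) : ℝ) : EReal)) = ⊤) := by
  constructor
  · intro hs
    set a := Real.sqrt (1 - s) with ha
    have ha0 : 0 ≤ a := Real.sqrt_nonneg _
    have ha2 : a ^ 2 = 1 - s := Real.sq_sqrt (by linarith)
    apply le_antisymm
    · refine iSup_le fun t => iSup_le fun ht => ?_
      rw [EReal.coe_le_coe_iff]
      have hdiv : (t - 1) ^ 2 / t * t = (t - 1) ^ 2 := div_mul_cancel₀ _ (ne_of_gt ht)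
      nlinarith [sq_nonneg (a * t - 1), mul_pos ht ht]
    · rcases eq_or_lt_of_le hs with h1 | h1
      · -- s = 1
        rw [le_iSup_iff]
        intro b hb
        have hb' : ∀ t : ℝ, 0 < t → ((s * t - (t - 1) ^ 2 / t : ℝ) : EReal) ≤ b :=
          fun t ht => by simpa [iSup_pos ht] using hb t
        induction b using EReal.rec with
        | bot =>
          have := hb' 1 one_pos
          simp at this
        | coe r =>
          rw [EReal.coe_le_coe_iff]
          by_contra hr
          push_neg at hr
          have ha' : a = 0 := by rw [ha, ← h1]; simp
          rw [ha'] at hr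
          have h2r : 0 < 2 - r := by linarith
          set t : ℝ := 2 / (2 - r) with htdef
          have ht : 0 < t := by positivity
          have := hb' t ht
          rw [EReal.coe_le_coe_iff] at this
          have hdiv : (t - 1) ^ 2 / t * t = (t - 1) ^ 2 := div_mul_cancel₀ _ (ne_of_gt ht)
          have htval : t * (2 - r) = 2 := by
            rw [htdef]; field_simp
          nlinarith [mul_pos ht ht]
        | top => exact le_top
      · -- s < 1
        have ha1 : 0 < a := Real.sqrt_pos.mpr (by linarith)
        have hkey : s * (1 / a) - (1 / a - 1) ^ 2 / (1 / a) = 2 - 2 * a := by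
          field_simp
          nlinarith [ha2]
        calc ((2 - 2 * a : ℝ) : EReal) = ((s * (1/a) - (1/a - 1) ^ 2 / (1/a) : ℝ) : EReal) := by
              rw [hkey]
          _ ≤ _ := le_iSup₂ (f := fun (t : ℝ) (_ : 0 < t) => ((s * t - (t - 1) ^ 2 / t : ℝ) : EReal))
                (1 / a) (by positivity)
  · intro hs
    rw [eq_top_iff, le_iSup_iff]
    intro b hb
    have hb' : ∀ t : ℝ, 0 < t → ((s * t - (t - 1) ^ 2 / t : ℝ) : EReal) ≤ b :=
      fun t ht => by simpa [iSup_pos ht] using hb t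
    induction b using EReal.rec with
    | bot =>
      have := hb' 1 one_pos
      simp at this
    | coe r =>
      exfalso
      set t : ℝ := max 1 (r / (s - 1)) with htdef
      have ht1 : (1 : ℝ) ≤ t := le_max_left _ _
      have ht : 0 < t := lt_of_lt_of_le one_pos ht1
      have hs1 : 0 < s - 1 := by linarith
      have hr : r ≤ (s - 1) * t := by
        rw [← div_le_iff₀' hs1]
        exact le_max_right _ _
      have := hb' t ht
      rw [EReal.coe_le_coe_iff] at this
      have hdiv : (t - 1) ^ 2 / t * t = (t - 1) ^ 2 := div_mul_cancel₀ _ (ne_of_gt ht)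
      nlinarith [mul_le_mul_of_nonneg_right hr (le_of_lt ht)]
    | top => exact le_top
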